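/- Let f : V → W be a surjective linear map of finite-dimensional real vector spaces and L ⊆ V × V* a Lagrangian subspace. Then the pushforward f_*L := {(f(v), β) ∈ W × W* : v ∈ V, β ∈ W*, (v, β∘f) ∈ L} is a Lagrangian subspace of W × W*. (Linear-algebra form of the pushforward of Dirac structures.) -/

import Mathlib

set_option maxSynthPendingDepth 2

/-- A subspace `L ⊆ V × V*` is Lagrangian if it equals its orthogonal
complement with respect to the symmetric pairing
`⟨(v,α),(w,β)⟩ = α(w) + β(v)`. -/
def IsLagrangian {V : Type*} [AddCommGroup V] [Module ℝ V]
    (L : Submodule ℝ (V × Module.Dual ℝ V)) : Prop :=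
  ∀ x : V × Module.Dual ℝ V, x ∈ L ↔ ∀ y ∈ L, x.2 y.1 + y.2 x.1 = 0

/-- The pushforward `f_*L = {(f v, β) : (v, β∘f) ∈ L}` of a Lagrangian
subspace `L ⊆ V × V*` along a surjective linear map `f : V → W` is a
Lagrangian subspace of `W × W*`. -/
theorem pushforward_of_lagrangian_is_lagrangian
    {V W : Type*} [AddCommGroup V] [Module ℝ V] [FiniteDimensional ℝ V]
    [AddCommGroup W] [Module ℝ W] [FiniteDimensional ℝ W]
    (f : V →ₗ[ℝ] W) (hf : Function.Surjective f)
    (L : Submodule ℝ (V × Module.Dual ℝ V)) (hL : IsLagrangian L) :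
    ∀ x : W × Module.Dual ℝ W,
      (∃ v : V, f v = x.1 ∧ (v, x.2 ∘ₗ f) ∈ L) ↔
      ∀ y : W × Module.Dual ℝ W,
        (∃ v : V, f v = y.1 ∧ (v, y.2 ∘ₗ f) ∈ L) →
        x.2 y.1 + y.2 x.1 = 0 := by
  intro x
  constructor
  · rintro ⟨v, hv, hvL⟩ y ⟨u, hu, huL⟩
    have h := (hL (v, x.2 ∘ₗ f)).mp hvL (u, y.2 ∘ₗ f) huL
    simp only [LinearMap.comp_apply] at h
    rw [← hu, ← hv]
    exact h
  · intro hx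
    obtain ⟨v₀, hv₀⟩ := hf x.1
    set K := LinearMap.ker f with hK
    -- the functional `φ(u,α) = x.2(f u) + α(v₀)` on `L`
    let φ : L →ₗ[ℝ] ℝ :=
      { toFun := fun z => x.2 (f z.1.1) + z.1.2 v₀
        map_add' := by intro a b; simp; ring
        map_smul' := by intro c a; simp; ring }
    -- restriction of the dual component to `K = ker f`
    let r : L →ₗ[ℝ] Module.Dual ℝ K :=
      { toFun := fun z => z.1.2 ∘ₗ K.subtype
        map_add' := by intro a b; rfl
        map_smul' := by intro c a; rfl }
    have hker : LinearMap.ker r ≤ LinearMap.ker φ := by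
      rintro ⟨⟨u, α⟩, hz⟩ hzr
      have hαK : ∀ k ∈ K, α k = 0 := by
        intro k hk
        have h0 : r ⟨(u, α), hz⟩ = 0 := hzr
        have := DFunLike.congr_fun h0 ⟨k, hk⟩
        exact this
      -- α descends to β₂ on W
      have hle : K ≤ LinearMap.ker α := fun k hk => hαK k hk
      let e := f.quotKerEquivOfSurjective hf
      let β₂ : Module.Dual ℝ W := (K.liftQ α hle) ∘ₗ (e.symm : W →ₗ[ℝ] V ⧸ K)
      have hβ₂ : ∀ v : V, β₂ (f v) = α v := by
        intro v
        have he : e (Submodule.Quotient.mk v) = f v := rfl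
        have : e.symm (f v) = Submodule.Quotient.mk v := by
          rw [← he, LinearEquiv.symm_apply_apply]
        simp only [β₂, LinearMap.comp_apply, LinearEquiv.coe_coe, this]
        rfl
      have hcomp : β₂ ∘ₗ f = α := by
        ext v; exact hβ₂ v
      have := hx (f u, β₂) ⟨u, rfl, by rw [hcomp]; exact hz⟩
      simp only [LinearMap.mem_ker]
      show x.2 (f u) + α v₀ = 0
      have hb : β₂ x.1 = α v₀ := by rw [← hv₀]; exact hβ₂ v₀
      rw [← hb]; exact this
    -- factor φ through range r and extend to a functional on `Dual ℝ K`
    obtain ⟨g, hg⟩ : ∃ g : Module.Dual ℝ (Module.Dual ℝ K) , ∀ z : L, g (r z) = φ z := by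
      let q : (↥L ⧸ LinearMap.ker r) ≃ₗ[ℝ] LinearMap.range r := r.quotKerEquivRange
      let φq := (LinearMap.ker r).liftQ φ hker
      obtain ⟨g, hg⟩ := LinearMap.exists_extend (φq ∘ₗ (q.symm : LinearMap.range r →ₗ[ℝ] _))
      refine ⟨g, fun z => ?_⟩
      have h2 : q ((LinearMap.ker r).mkQ z) = ⟨r z, LinearMap.mem_range_self r z⟩ := by
        apply Subtype.ext
        simp [q, LinearMap.quotKerEquivRange]
      calc g (r z) = (g ∘ₗ (LinearMap.range r).subtype) ⟨r z, LinearMap.mem_range_self r z⟩ := rfl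
        _ = (φq ∘ₗ (q.symm : LinearMap.range r →ₗ[ℝ] _)) ⟨r z, LinearMap.mem_range_self r z⟩ := by
              rw [hg]
        _ = φq (q.symm ⟨r z, LinearMap.mem_range_self r z⟩) := rfl
        _ = φq ((LinearMap.ker r).mkQ z) := by rw [← h2, LinearEquiv.symm_apply_apply]
        _ = φ z := rfl
    -- g is evaluation at some k ∈ K, by reflexivity of finite-dimensional spaces
    set k : K := (Module.evalEquiv ℝ K).symm g with hk
    have hgk : ∀ α : Module.Dual ℝ K, g α = α k := by
      intro α
      rw [hk]
      exact (Module.apply_evalEquiv_symm_apply ℝ K α g).symm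
    refine ⟨v₀ - k.1, ?_, ?_⟩
    · have : f k.1 = 0 := k.2
      simp [this, hv₀]
    · rw [hL]
      rintro ⟨u, α⟩ hy
      have h1 : g (r ⟨(u, α), hy⟩) = φ ⟨(u, α), hy⟩ := hg _
      rw [hgk] at h1
      have h2 : α k.1 = x.2 (f u) + α v₀ := h1
      show (x.2 ∘ₗ f) u + α (v₀ - k.1) = 0
      simp only [LinearMap.comp_apply, map_sub]
      rw [h2]; ring
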